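/- A closed Euclidean disk D in ℝ² of positive radius cannot be partitioned into two subsets both of diameter strictly smaller than diam(D). (Hence the Borsuk number of a disk is at least 3.) -/

import Mathlib

open Real Metric

noncomputable def qpt (p : EuclideanSpace ℝ (Fin 2)) (r θ : ℝ) : EuclideanSpace ℝ (Fin 2) :=
  WithLp.toLp 2 ![p 0 + r * Real.cos θ, p 1 + r * Real.sin θ]

lemma qpt_dist (p : EuclideanSpace ℝ (Fin 2)) (r : ℝ) (hr : 0 ≤ r) (θ φ : ℝ) :
    dist (qpt p r θ) (qpt p r φ) = r * Real.sqrt (2 - 2 * Real.cos (θ - φ)) := by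
  rw [EuclideanSpace.dist_eq, Fin.sum_univ_two]
  simp only [qpt, PiLp.toLp_apply, Matrix.cons_val_zero, Matrix.cons_val_one, Matrix.head_cons, Real.dist_eq]
  rw [show |p 0 + r * Real.cos θ - (p 0 + r * Real.cos φ)| ^ 2
      = (r * (Real.cos θ - Real.cos φ))^2 by rw [sq_abs]; ring,
    show |p 1 + r * Real.sin θ - (p 1 + r * Real.sin φ)| ^ 2
      = (r * (Real.sin θ - Real.sin φ))^2 by rw [sq_abs]; ring]
  rw [show (r * (Real.cos θ - Real.cos φ))^2 + (r * (Real.sin θ - Real.sin φ))^2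
      = r^2 * (2 - 2 * Real.cos (θ - φ)) by
    rw [Real.cos_sub]
    nlinarith [Real.sin_sq_add_cos_sq θ, Real.sin_sq_add_cos_sq φ]]
  rw [Real.sqrt_mul (sq_nonneg r), Real.sqrt_sq hr]

lemma qpt_mem (p : EuclideanSpace ℝ (Fin 2)) (r : ℝ) (hr : 0 ≤ r) (θ : ℝ) :
    qpt p r θ ∈ Metric.closedBall p r := by
  rw [Metric.mem_closedBall, EuclideanSpace.dist_eq, Fin.sum_univ_two]
  simp only [qpt, PiLp.toLp_apply, Matrix.cons_val_zero, Matrix.cons_val_one, Matrix.head_cons, Real.dist_eq]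
  rw [show |p 0 + r * Real.cos θ - p 0| ^ 2 + |p 1 + r * Real.sin θ - p 1| ^ 2 = r ^ 2 by
    rw [sq_abs, sq_abs]; nlinarith [Real.sin_sq_add_cos_sq θ]]
  rw [Real.sqrt_sq hr]

theorem disk_no_two_piece_partition
    (p : EuclideanSpace ℝ (Fin 2)) (r : ℝ) (hr : 0 < r) :
    ¬ ∃ C₁ C₂ : Set (EuclideanSpace ℝ (Fin 2)),
      Metric.closedBall p r = C₁ ∪ C₂ ∧
      Metric.diam C₁ < 2 * r ∧ Metric.diam C₂ < 2 * r := by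
  rintro ⟨C₁, C₂, hcov, h1, h2⟩
  set d : ℝ := max (Metric.diam C₁) (Metric.diam C₂) with hd_def
  have hd0 : 0 ≤ d := le_max_of_le_left Metric.diam_nonneg
  have hd : d < 2 * r := max_lt h1 h2
  -- bounds for the two pieces
  have hsub1 : C₁ ⊆ Metric.closedBall p r := hcov ▸ Set.subset_union_left
  have hsub2 : C₂ ⊆ Metric.closedBall p r := hcov ▸ Set.subset_union_right
  have hb1 : Bornology.IsBounded C₁ := Metric.isBounded_closedBall.subset hsub1
  have hb2 : Bornology.IsBounded C₂ := Metric.isBounded_closedBall.subset hsub2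
  -- choose n
  have hs : 0 < (4 * r^2 - d^2) / r^2 := div_pos (by nlinarith) (by positivity)
  obtain ⟨n, hn⟩ := exists_nat_gt (max 1 (π / Real.sqrt ((4 * r^2 - d^2) / r^2)))
  have hn1 : (1:ℝ) < n := lt_of_le_of_lt (le_max_left _ _) hn
  have hnpos : 0 < (n:ℝ) := by linarith
  set α : ℝ := π / n with hα_def
  have hαpos : 0 < α := div_pos Real.pi_pos hnpos
  have hnα : (n:ℝ) * α = π := by rw [hα_def]; field_simp
  -- the crucial estimate: r * sqrt (2 + 2 cos α) > d
  have hkey : d < r * Real.sqrt (2 + 2 * Real.cos α) := by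
    have hcos : 1 - α^2/2 ≤ Real.cos α := Real.one_sub_sq_div_two_le_cos
    have hα2 : α^2 < (4 * r^2 - d^2) / r^2 := by
      have h1 : π / Real.sqrt ((4 * r^2 - d^2) / r^2) < n :=
        lt_of_le_of_lt (le_max_right _ _) hn
      have hssq : 0 < Real.sqrt ((4 * r^2 - d^2) / r^2) := Real.sqrt_pos.mpr hs
      have hlt : α < Real.sqrt ((4 * r^2 - d^2) / r^2) := by
        rw [hα_def, div_lt_iff₀ hnpos]
        have := (div_lt_iff₀ hssq).mp h1
        nlinarith
      have hsq : α^2 < (Real.sqrt ((4 * r^2 - d^2) / r^2))^2 := by nlinarith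
      rwa [Real.sq_sqrt hs.le] at hsq
    have h2 : d^2 < r^2 * (2 + 2 * Real.cos α) := by
      have hr2 : 0 < r^2 := by positivity
      have hmul : α^2 * r^2 < 4 * r^2 - d^2 := by
        have := (lt_div_iff₀ hr2).mp hα2
        linarith
      nlinarith
    calc d = Real.sqrt (d^2) := (Real.sqrt_sq hd0).symm
      _ < Real.sqrt (r^2 * (2 + 2 * Real.cos α)) := by
          exact Real.sqrt_lt_sqrt (by positivity) h2
      _ = r * Real.sqrt (2 + 2 * Real.cos α) := by
          rw [Real.sqrt_mul (sq_nonneg r), Real.sqrt_sq hr.le]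
  -- distance facts
  have dist_pi : ∀ θ : ℝ, dist (qpt p r θ) (qpt p r (θ + π)) = 2 * r := by
    intro θ
    rw [qpt_dist p r hr.le, show θ - (θ + π) = -π by ring, Real.cos_neg, Real.cos_pi]
    rw [show (2 : ℝ) - 2 * (-1) = 4 by norm_num]
    rw [show (4:ℝ) = 2^2 by norm_num, Real.sqrt_sq (by norm_num)]
    ring
  have dist_pa : ∀ θ : ℝ, d < dist (qpt p r θ) (qpt p r (θ + (π + α))) := by
    intro θ
    rw [qpt_dist p r hr.le, show θ - (θ + (π + α)) = -(π + α) by ring, Real.cos_neg,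
      Real.cos_add, Real.cos_pi, Real.sin_pi]
    rw [show (2:ℝ) - 2 * (-1 * Real.cos α - 0 * Real.sin α) = 2 + 2 * Real.cos α by ring]
    exact hkey
  -- separation
  have mem_union : ∀ θ : ℝ, qpt p r θ ∈ C₁ ∪ C₂ := fun θ => hcov ▸ qpt_mem p r hr.le θ
  have sep1 : ∀ x y, x ∈ C₁ → y ∈ C₁ → dist x y ≤ d :=
    fun x y hx hy => (Metric.dist_le_diam_of_mem hb1 hx hy).trans (le_max_left _ _)
  have sep2 : ∀ x y, x ∈ C₂ → y ∈ C₂ → dist x y ≤ d :=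
    fun x y hx hy => (Metric.dist_le_diam_of_mem hb2 hx hy).trans (le_max_right _ _)
  -- the chain
  have step : ∀ k : ℕ, (qpt p r (k * α) ∈ C₁ ↔ qpt p r ((k+1 : ℕ) * α) ∈ C₁) := by
    intro k
    set x := qpt p r (k * α)
    set y := qpt p r ((k+1 : ℕ) * α)
    set z := qpt p r (k * α + (π + α)) with hz
    have hdxz : d < dist x z := dist_pa _
    have hdyz : dist y z = 2 * r := by
      have : z = qpt p r ((k+1:ℕ) * α + π) := by
        rw [hz]; norm_num; ring_nf
      rw [this]; exact dist_pi _
    constructor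
    · intro hx
      have hz2 : z ∈ C₂ := by
        rcases mem_union (k * α + (π + α)) with h | h
        · exact absurd (sep1 _ _ hx h) (not_le.mpr hdxz)
        · exact h
      rcases mem_union ((k+1:ℕ) * α) with h | h
      · exact h
      · have := sep2 _ _ h hz2
        rw [hdyz] at this; linarith
    · intro hy
      by_contra hx
      have hx2 : x ∈ C₂ := (mem_union (k * α)).resolve_left hx
      have hz1 : z ∈ C₁ := by
        rcases mem_union (k * α + (π + α)) with h | h
        · exact h
        · exact absurd (sep2 _ _ hx2 h) (not_le.mpr hdxz)
      have := sep1 _ _ hy hz1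
      rw [show dist y z = dist y z from rfl] at hdyz
      rw [hdyz] at this; linarith
  have chain : ∀ k : ℕ, (qpt p r ((0:ℕ) * α) ∈ C₁ ↔ qpt p r (k * α) ∈ C₁) := by
    intro k
    induction k with
    | zero => rfl
    | succ k ih => exact ih.trans (step k)
  have hfin : dist (qpt p r ((0:ℕ) * α)) (qpt p r ((n:ℕ) * α)) = 2 * r := by
    have : ((n:ℕ):ℝ) * α = (0:ℕ) * α + π := by push_cast; linarith [hnα]
    rw [this]; exact dist_pi _
  rcases mem_union ((0:ℕ) * α) with h | h
  · have h' := (chain n).mp h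
    have := sep1 _ _ h h'
    rw [hfin] at this; linarith
  · have h0 : qpt p r ((0:ℕ) * α) ∉ C₁ → qpt p r ((n:ℕ) * α) ∈ C₂ := by
      intro hn0
      exact (mem_union _).resolve_left (fun hc => hn0 ((chain n).mpr hc))
    by_cases hc1 : qpt p r ((0:ℕ) * α) ∈ C₁
    · have h' := (chain n).mp hc1
      have := sep1 _ _ hc1 h'
      rw [hfin] at this; linarith
    · have := sep2 _ _ h (h0 hc1)
      rw [hfin] at this; linarith
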